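/- Let β ≤ 1 ≤ α be positive reals and let g ∈ GL(d,ℝ) with det g = ±1 lie in the Siegel set 𝔖(α,β) = K A_α N_β. Then ‖g‖_∞ ≤ √d · α^{(d−1)²/2} · max{1, ‖g e₁‖_euc^{−(d−1)}}, where ‖g‖_∞ is the max of absolute values of entries and ‖·‖_euc the Euclidean norm. -/

import Mathlib

open Finset

private lemma arith_key (l s : ℕ) (hs : 1 ≤ s) :
    s * (s - 1) + l * (l - 1) ≤ s * (s + l - 1) ^ 2 := by
  obtain ⟨t, rfl⟩ : ∃ t, s = t + 1 := ⟨s - 1, by omega⟩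
  rcases Nat.eq_zero_or_pos l with rfl | hl
  · simp only [Nat.add_zero, Nat.add_sub_cancel, Nat.mul_zero, Nat.zero_mul, Nat.add_zero]
    have : t ≤ t ^ 2 := by nlinarith
    nlinarith
  · obtain ⟨u, rfl⟩ : ∃ u, l = u + 1 := ⟨l - 1, by omega⟩
    have h1 : t + 1 + (u + 1) - 1 = t + u + 1 := by omega
    have h2 : u + 1 - 1 = u := by omega
    have h3 : t + 1 - 1 = t := by omega
    rw [h1, h2, h3]
    nlinarith

private lemma siegel_key (d : ℕ) (hd : 0 < d) (α : ℝ) (hα : 1 ≤ α) (b : ℕ → ℝ)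
    (hb : ∀ m, m < d → 0 < b m)
    (hbc : ∀ m, m + 1 < d → b m ≤ α * b (m + 1))
    (hprod : ∏ m ∈ Finset.range d, b m = 1)
    (l : ℕ) (hl : l < d) :
    b l ≤ α ^ (((d : ℝ) - 1) ^ 2 / 2) * max 1 (b 0 ^ (-((d : ℝ) - 1))) := by
  have hα0 : (0:ℝ) < α := lt_of_lt_of_le one_pos hα
  have hb0 : 0 < b 0 := hb 0 hd
  -- iterated chain inequality
  have hch : ∀ p, p < d → ∀ m, m ≤ p → b m ≤ α ^ (p - m) * b p := by
    intro p
    induction p with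
    | zero =>
      intro _ m hm
      obtain rfl : m = 0 := Nat.le_zero.mp hm
      simp
    | succ p ih =>
      intro hp m hm
      rcases Nat.eq_or_lt_of_le hm with rfl | hm'
      · simp
      · have hm2 : m ≤ p := Nat.lt_succ_iff.mp hm'
        have h1 := ih (lt_trans (Nat.lt_succ_self p) hp) m hm2
        have h2 := hbc p hp
        calc b m ≤ α ^ (p - m) * b p := h1
          _ ≤ α ^ (p - m) * (α * b (p+1)) :=
              mul_le_mul_of_nonneg_left h2 (by positivity)
          _ = α ^ (p + 1 - m) * b (p+1) := by
              rw [show p + 1 - m = (p - m) + 1 from by omega, pow_succ]; ring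
  set s := d - l with hsdef
  have hs1 : 1 ≤ s := by omega
  set A := b 0 with hA
  set T1 := ∑ m ∈ Finset.Ico l d, (m - l) with hT1
  set T2 := ∑ m ∈ Finset.range l, m with hT2
  -- step 1 : b l ^ s ≤ α ^ T1 * ∏_{Ico l d} b m
  have h1 : b l ^ s ≤ α ^ T1 * ∏ m ∈ Finset.Ico l d, b m := by
    have he : b l ^ s = ∏ _m ∈ Finset.Ico l d, b l := by
      rw [Finset.prod_const, Nat.card_Ico]
    rw [he, hT1, ← Finset.prod_pow_eq_pow_sum, ← Finset.prod_mul_distrib]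
    refine Finset.prod_le_prod (fun m _ => (hb l hl).le) (fun m hm => ?_)
    have hmm := Finset.mem_Ico.mp hm
    exact hch m hmm.2 l hmm.1
  -- step 2 : lower bound for ∏_{range l} b m
  have h2 : A ^ l / α ^ T2 ≤ ∏ m ∈ Finset.range l, b m := by
    have he : A ^ l / α ^ T2 = ∏ m ∈ Finset.range l, (A / α ^ m) := by
      rw [Finset.prod_div_distrib, Finset.prod_const, Finset.card_range, hT2,
        ← Finset.prod_pow_eq_pow_sum]
    rw [he]
    refine Finset.prod_le_prod (fun m _ => by positivity) (fun m hm => ?_)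
    have hm' : m < l := Finset.mem_range.mp hm
    have := hch m (lt_trans hm' hl) 0 (Nat.zero_le m)
    rw [div_le_iff₀ (by positivity)]
    simpa [mul_comm] using this
  -- products split
  have hsplit : (∏ m ∈ Finset.range l, b m) * ∏ m ∈ Finset.Ico l d, b m = 1 := by
    rw [Finset.range_eq_Ico, Finset.prod_Ico_consecutive _ (Nat.zero_le l) hl.le,
      ← Finset.range_eq_Ico, hprod]
  have hposL : 0 < ∏ m ∈ Finset.range l, b m :=
    Finset.prod_pos (fun m hm => hb m (lt_trans (Finset.mem_range.mp hm) hl))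
  have h3 : ∏ m ∈ Finset.Ico l d, b m ≤ α ^ T2 / A ^ l := by
    have heq : ∏ m ∈ Finset.Ico l d, b m = (∏ m ∈ Finset.range l, b m)⁻¹ := by
      field_simp
      linarith [hsplit]
    rw [heq, ← inv_div]
    exact inv_anti₀ (by positivity) h2
  -- combine
  have h4 : b l ^ s ≤ α ^ (T1 + T2) * (A ^ l)⁻¹ := by
    calc b l ^ s ≤ α ^ T1 * ∏ m ∈ Finset.Ico l d, b m := h1
      _ ≤ α ^ T1 * (α ^ T2 / A ^ l) := mul_le_mul_of_nonneg_left h3 (by positivity)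
      _ = α ^ (T1 + T2) * (A ^ l)⁻¹ := by rw [pow_add]; ring
  -- the nat exponent bound
  have hTnat : (T1 + T2) * 2 ≤ s * (d - 1) ^ 2 := by
    have e1 : T1 = ∑ i ∈ Finset.range s, i := by
      rw [hT1, Finset.sum_Ico_eq_sum_range]
      exact Finset.sum_congr rfl (fun i _ => by omega)
    have e2 : T1 * 2 = s * (s - 1) := by rw [e1]; exact Finset.sum_range_id_mul_two s
    have e3 : T2 * 2 = l * (l - 1) := Finset.sum_range_id_mul_two l
    have e4 := arith_key l s hs1
    have e5 : s + l - 1 = d - 1 := by omega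
    rw [e5] at e4
    omega
  set C := α ^ (((d : ℝ) - 1) ^ 2 / 2) with hC
  set M := max 1 (A ^ (-((d : ℝ) - 1))) with hM
  have hcast : ((d : ℝ) - 1) = ((d - 1 : ℕ) : ℝ) := by
    rw [Nat.cast_sub hd]; simp
  have hC1 : (1:ℝ) ≤ C := by
    rw [hC]
    apply Real.one_le_rpow hα (by positivity)
  have hM1 : (1:ℝ) ≤ M := le_max_left _ _
  have hαT : α ^ (T1 + T2) ≤ C ^ s := by
    have hcs : C ^ s = α ^ ((((d : ℝ) - 1) ^ 2 / 2) * s) := by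
      rw [hC, ← Real.rpow_natCast (α ^ (((d : ℝ) - 1) ^ 2 / 2)) s, ← Real.rpow_mul hα0.le]
    rw [hcs, ← Real.rpow_natCast α (T1 + T2)]
    apply Real.rpow_le_rpow_of_exponent_le hα
    have hle := (Nat.cast_le (α := ℝ)).mpr hTnat
    push_cast at hle
    rw [hcast]
    push_cast
    nlinarith [hle]
  have hMl : (A ^ l)⁻¹ ≤ M ^ s := by
    rcases le_or_gt 1 A with h | h
    · have h1' : (1:ℝ) ≤ A ^ l := one_le_pow₀ h
      calc (A ^ l)⁻¹ ≤ 1 := inv_le_one_of_one_le₀ h1'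
        _ ≤ M ^ s := one_le_pow₀ hM1
    · have hAi : (1:ℝ) ≤ A⁻¹ := (one_le_inv₀ hb0).mpr h.le
      have hM2 : (A⁻¹) ^ (d - 1) ≤ M := by
        have he : A ^ (-((d : ℝ) - 1)) = (A⁻¹) ^ (d - 1) := by
          rw [hcast, Real.rpow_neg hb0.le, Real.rpow_natCast, ← inv_pow]
        rw [hM, ← he]
        exact le_max_right _ _
      have hls : l ≤ (d - 1) * s := by
        calc l ≤ d - 1 := by omega
          _ ≤ (d - 1) * s := Nat.le_mul_of_pos_right _ (by omega)
      calc (A ^ l)⁻¹ = (A⁻¹) ^ l := (inv_pow A l).symm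
        _ ≤ (A⁻¹) ^ ((d - 1) * s) := pow_le_pow_right₀ hAi hls
        _ = ((A⁻¹) ^ (d - 1)) ^ s := pow_mul _ _ _
        _ ≤ M ^ s := pow_le_pow_left₀ (by positivity) hM2 s
  have hfin : b l ^ s ≤ (C * M) ^ s := by
    calc b l ^ s ≤ α ^ (T1 + T2) * (A ^ l)⁻¹ := h4
      _ ≤ C ^ s * M ^ s := mul_le_mul hαT hMl (by positivity) (by positivity)
      _ = (C * M) ^ s := (mul_pow _ _ _).symm
  exact le_of_pow_le_pow_left₀ (by omega) (by positivity) hfin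

/-- Let `β ≤ 1 ≤ α` and let `g ∈ GL(d,ℝ)` with `det g = ±1` lie in the Siegel set
`𝔖(α,β) = K A_α N_β` (so `g = k a n` with `k` orthogonal, `a` positive diagonal with
`a_i ≤ α a_{i+1}`, and `n` unipotent upper triangular with off-diagonal entries bounded by `β`).
Then every entry of `g` is bounded by
`√d · α^{(d−1)²/2} · max {1, ‖g e₁‖_euc^{−(d−1)}}`. -/
theorem siegel_set_entry_bound {d : ℕ} (hd : 0 < d) (α β : ℝ)
    (hβ0 : 0 < β) (hβ : β ≤ 1) (hα : 1 ≤ α)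
    (g k n : Matrix (Fin d) (Fin d) ℝ) (a : Fin d → ℝ)
    (hdet : g.det = 1 ∨ g.det = -1)
    (hk : k.transpose * k = 1)
    (ha : ∀ i, 0 < a i)
    (hchain : ∀ i j : Fin d, (j : ℕ) = (i : ℕ) + 1 → a i ≤ α * a j)
    (hn1 : ∀ i, n i i = 1) (hn0 : ∀ i j, j < i → n i j = 0)
    (hnβ : ∀ i j, i < j → |n i j| ≤ β)
    (hg : g = k * Matrix.diagonal a * n) :
    ∀ i j, |g i j| ≤ Real.sqrt d * α ^ (((d : ℝ) - 1) ^ 2 / 2) *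
      max 1 ((Real.sqrt (∑ i, (g i ⟨0, hd⟩) ^ 2)) ^ (-((d : ℝ) - 1))) := by
  have hα0 : (0:ℝ) < α := lt_of_lt_of_le one_pos hα
  set j0 : Fin d := ⟨0, hd⟩ with hj0
  -- |n| entries bounded by 1
  have hn_le1 : ∀ l j : Fin d, |n l j| ≤ 1 := by
    intro l j
    rcases lt_trichotomy l j with h | h | h
    · exact le_trans (hnβ l j h) hβ
    · subst h; rw [hn1]; simp
    · rw [hn0 l j h]; simp
  -- determinant of n is 1
  have hdetn : n.det = 1 := by
    rw [Matrix.det_of_upperTriangular (fun i j h => hn0 i j h)]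
    simp [hn1]
  -- |det k| = 1
  have hdetk : k.det = 1 ∨ k.det = -1 := by
    have h := congrArg Matrix.det hk
    rw [Matrix.det_mul, Matrix.det_transpose, Matrix.det_one] at h
    exact mul_self_eq_one_iff.mp h
  -- product of a equals 1
  have hprodA : ∏ i, a i = 1 := by
    have hgd : g.det = k.det * ∏ i, a i := by
      rw [hg, Matrix.det_mul, Matrix.det_mul, Matrix.det_diagonal, hdetn, mul_one]
    have hg1 : |g.det| = 1 := by rcases hdet with h | h <;> simp [h]
    have hk1 : |k.det| = 1 := by rcases hdetk with h | h <;> simp [h]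
    have habs : |∏ i, a i| = 1 := by
      have h3 := congrArg abs hgd
      rw [abs_mul, hk1, one_mul, hg1] at h3
      exact h3.symm
    have hpos : 0 < ∏ i, a i := Finset.prod_pos (fun i _ => ha i)
    rwa [abs_of_pos hpos] at habs
  -- Gram matrix computation
  have hG : g.transpose * g = n.transpose * (Matrix.diagonal (fun l => a l ^ 2) * n) := by
    rw [hg]
    have hdd : Matrix.diagonal a * Matrix.diagonal a
        = Matrix.diagonal (fun l => a l ^ 2) := by
      rw [Matrix.diagonal_mul_diagonal]
      congr 1; funext l; ring
    have hstep : (k * Matrix.diagonal a * n).transpose * (k * Matrix.diagonal a * n)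
        = n.transpose * (Matrix.diagonal a *
            ((k.transpose * k) * (Matrix.diagonal a * n))) := by
      simp only [Matrix.transpose_mul, Matrix.diagonal_transpose, Matrix.mul_assoc]
    rw [hstep, hk, Matrix.one_mul,
      ← Matrix.mul_assoc (Matrix.diagonal a) (Matrix.diagonal a) n, hdd]
  have hS : ∀ j, (∑ i, (g i j) ^ 2) = ∑ l, (a l * n l j) ^ 2 := by
    intro j
    have h := congrFun (congrFun hG j) j
    have hL : (g.transpose * g) j j = ∑ i, (g i j) ^ 2 := by
      rw [Matrix.mul_apply]
      exact Finset.sum_congr rfl (fun i _ => by rw [Matrix.transpose_apply]; ring)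
    have hR : (n.transpose * (Matrix.diagonal (fun l => a l ^ 2) * n)) j j
        = ∑ l, (a l * n l j) ^ 2 := by
      rw [Matrix.mul_apply]
      refine Finset.sum_congr rfl (fun l _ => ?_)
      rw [Matrix.transpose_apply, Matrix.diagonal_mul]
      ring
    rw [← hL, ← hR, h]
  -- the norm of first column
  have hSval : Real.sqrt (∑ i, (g i j0) ^ 2) = a j0 := by
    rw [hS j0]
    have hone : (∑ l, (a l * n l j0) ^ 2) = (a j0) ^ 2 := by
      rw [Finset.sum_eq_single j0]
      · rw [hn1]; ring
      · intro l _ hne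
        have hlt : j0 < l := by
          rcases lt_trichotomy j0 l with h | h | h
          · exact h
          · exact absurd h.symm hne
          · exact absurd (Fin.le_def.mpr (Nat.zero_le _)) (not_le.mpr h)
        rw [hn0 l j0 hlt]; ring
      · intro h; exact absurd (Finset.mem_univ j0) h
    rw [hone, Real.sqrt_sq (ha j0).le]
  -- apply the key lemma
  set C := α ^ (((d : ℝ) - 1) ^ 2 / 2) with hC
  have hbound : ∀ l : Fin d, a l ≤ C * max 1 ((a j0) ^ (-((d : ℝ) - 1))) := by
    intro l
    set b : ℕ → ℝ := fun m => if h : m < d then a ⟨m, h⟩ else 1 with hb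
    have hb0 : b 0 = a j0 := by simp [hb, hd, hj0]
    have hbl : b l.1 = a l := by simp [hb, l.isLt]
    have key := siegel_key d hd α hα b
      (fun m hm => by simp only [hb, dif_pos hm]; exact ha _)
      (fun m hm => by
        have hm' : m < d := by omega
        simp only [hb, dif_pos hm', dif_pos hm]
        exact hchain ⟨m, hm'⟩ ⟨m + 1, hm⟩ rfl)
      (by
        rw [← Fin.prod_univ_eq_prod_range b d]
        rw [show (∏ i : Fin d, b i.1) = ∏ i : Fin d, a i from
          Finset.prod_congr rfl (fun i _ => by simp [hb, i.isLt])]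
        exact hprodA)
      l.1 l.isLt
    rwa [hb0, hbl] at key
  -- final bound
  intro i j
  set B := C * max 1 ((a j0) ^ (-((d : ℝ) - 1))) with hB
  have hBpos : 0 < B := by
    have : (0:ℝ) < C := Real.rpow_pos_of_pos hα0 _
    have h2 : (1:ℝ) ≤ max 1 ((a j0) ^ (-((d : ℝ) - 1))) := le_max_left _ _
    nlinarith
  have h1 : |g i j| ≤ Real.sqrt (∑ i', (g i' j) ^ 2) := by
    rw [← Real.sqrt_sq_eq_abs]
    exact Real.sqrt_le_sqrt (Finset.single_le_sum
      (fun i' _ => sq_nonneg (g i' j)) (Finset.mem_univ i))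
  have h2 : (∑ i', (g i' j) ^ 2) ≤ d * B ^ 2 := by
    rw [hS j]
    calc (∑ l, (a l * n l j) ^ 2) ≤ ∑ _l : Fin d, B ^ 2 := by
          refine Finset.sum_le_sum (fun l _ => ?_)
          have habs : |a l * n l j| ≤ B := by
            rw [abs_mul, abs_of_pos (ha l)]
            calc a l * |n l j| ≤ a l * 1 :=
                  mul_le_mul_of_nonneg_left (hn_le1 l j) (ha l).le
              _ = a l := mul_one _
              _ ≤ B := hbound l
          calc (a l * n l j) ^ 2 = |a l * n l j| ^ 2 := (sq_abs _).symm
            _ ≤ B ^ 2 := pow_le_pow_left₀ (abs_nonneg _) habs 2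
      _ = d * B ^ 2 := by simp [Finset.card_univ, mul_comm]
  have h3 : |g i j| ≤ Real.sqrt d * B := by
    calc |g i j| ≤ Real.sqrt (∑ i', (g i' j) ^ 2) := h1
      _ ≤ Real.sqrt (d * B ^ 2) := Real.sqrt_le_sqrt h2
      _ = Real.sqrt d * B := by
          rw [Real.sqrt_mul (Nat.cast_nonneg d), Real.sqrt_sq hBpos.le]
  rw [hSval]
  calc |g i j| ≤ Real.sqrt d * B := h3
    _ = Real.sqrt d * C * max 1 ((a j0) ^ (-((d : ℝ) - 1))) := by rw [hB]; ring
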